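/- Let N = s·2^{n+1} with s ≥ 3 odd and 0 ≤ r ≤ n, and let L = ℚ(ζ_N), K = ℚ(ζ_N^{2^{n−r}}). For any x_0, …, x_{2^{n−r}−1} ∈ K, the element x = ∑_{k=0}^{2^{n−r}−1} x_k ζ_N^k satisfies Tr_{L/ℚ}(x·conj(x)) = 2^{n−r} · ∑_{k=0}^{2^{n−r}−1} Tr_{K/ℚ}(x_k·conj(x_k)). -/

import Mathlib

open IntermediateField

set_option maxHeartbeats 2000000 in
set_option synthInstance.maxHeartbeats 400000 in
theorem stmt11_aux (N d M : ℕ) (hdpos : 0 < d) (hMpos : 0 < M) (hNdM : N = d * M)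
    (htot : N.totient = d * M.totient)
    (ζ : ℂ) (hζ : IsPrimitiveRoot ζ N)
    (x : Fin d → ℚ⟮ζ ^ d⟯)
    (y : ℚ⟮ζ⟯) (hy : (y : ℂ) = ∑ k : Fin d, (x k : ℂ) * ζ ^ (k : ℕ))
    (y' : ℚ⟮ζ⟯) (hy' : (y' : ℂ) = (starRingEnd ℂ) (y : ℂ))
    (x' : Fin d → ℚ⟮ζ ^ d⟯)
    (hx' : ∀ k, (x' k : ℂ) = (starRingEnd ℂ) (x k : ℂ)) :
    Algebra.trace ℚ ℚ⟮ζ⟯ (y * y')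
      = (d : ℚ) * ∑ k : Fin d, Algebra.trace ℚ ℚ⟮ζ ^ d⟯ (x k * x' k) := by
  have hNpos : 0 < N := by rw [hNdM]; positivity
  have hζM : IsPrimitiveRoot (ζ ^ d) M := hζ.pow hNpos hNdM
  obtain ⟨ω, hωdef⟩ : ∃ w : ℂ, w = ζ ^ M := ⟨_, rfl⟩
  have hω : IsPrimitiveRoot ω d := hωdef ▸ hζ.pow hNpos (by rw [hNdM]; ring)
  have hζne : ζ ≠ 0 := hζ.ne_zero hNpos.ne'
  have hωne : ω ≠ 0 := hωdef ▸ pow_ne_zero _ hζne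
  -- K ≤ L and algebra structure
  have hζmem : ζ ∈ ℚ⟮ζ⟯ := mem_adjoin_simple_self ℚ ζ
  have hKL : ℚ⟮ζ ^ d⟯ ≤ ℚ⟮ζ⟯ := adjoin_simple_le_iff.mpr (pow_mem hζmem d)
  letI : Algebra (ℚ⟮ζ ^ d⟯) (ℚ⟮ζ⟯) := (inclusion hKL).toRingHom.toAlgebra
  haveI : IsScalarTower ℚ (ℚ⟮ζ ^ d⟯) (ℚ⟮ζ⟯) :=
    IsScalarTower.of_algebraMap_eq fun q => Subtype.ext rfl
  haveI : IsScalarTower (ℚ⟮ζ ^ d⟯) (ℚ⟮ζ⟯) ℂ := IsScalarTower.of_algebraMap_eq fun a => rfl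
  -- finite dimensionality
  have hζint : IsIntegral ℚ ζ := (hζ.isIntegral hNpos).tower_top
  have hζdint : IsIntegral ℚ (ζ ^ d) := hζint.pow d
  haveI : FiniteDimensional ℚ ℚ⟮ζ⟯ := adjoin.finiteDimensional hζint
  haveI : FiniteDimensional ℚ ℚ⟮ζ ^ d⟯ := adjoin.finiteDimensional hζdint
  haveI : FiniteDimensional (ℚ⟮ζ ^ d⟯) (ℚ⟮ζ⟯) := FiniteDimensional.right ℚ _ _
  haveI : CharZero (ℚ⟮ζ ^ d⟯) := charZero_of_injective_algebraMap (algebraMap ℚ _).injective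
  -- finrank computations
  have hrankL : Module.finrank ℚ ℚ⟮ζ⟯ = N.totient := by
    rw [adjoin.finrank hζint, ← Polynomial.cyclotomic_eq_minpoly_rat hζ hNpos,
      Polynomial.natDegree_cyclotomic]
  have hrankK : Module.finrank ℚ ℚ⟮ζ ^ d⟯ = M.totient := by
    rw [adjoin.finrank hζdint, ← Polynomial.cyclotomic_eq_minpoly_rat hζM hMpos,
      Polynomial.natDegree_cyclotomic]
  have hrankKL : Module.finrank (ℚ⟮ζ ^ d⟯) (ℚ⟮ζ⟯) = d := by
    have hmul := Module.finrank_mul_finrank ℚ (ℚ⟮ζ ^ d⟯) (ℚ⟮ζ⟯)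
    rw [hrankK, hrankL, htot] at hmul
    have hMt : 0 < M.totient := Nat.totient_pos.mpr hMpos
    exact Nat.eq_of_mul_eq_mul_left hMt (by rw [hmul]; ring)
  -- the generator
  set ζL : ℚ⟮ζ⟯ := AdjoinSimple.gen ℚ ζ with hζL
  have hcoe_alg : ∀ a : ℚ⟮ζ ^ d⟯, ((algebraMap (ℚ⟮ζ ^ d⟯) (ℚ⟮ζ⟯) a : ℚ⟮ζ⟯) : ℂ) = (a : ℂ) :=
    fun a => rfl
  have hcoe_algC : ∀ a : ℚ⟮ζ ^ d⟯, algebraMap (ℚ⟮ζ ^ d⟯) ℂ a = (a : ℂ) := fun a => rfl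
  have hζLcoe : (ζL : ℂ) = ζ := rfl
  -- express y, y' in terms of the generator
  have hyL : y = ∑ k : Fin d, algebraMap (ℚ⟮ζ ^ d⟯) (ℚ⟮ζ⟯) (x k) * ζL ^ (k : ℕ) := by
    apply Subtype.coe_injective
    push_cast [hy, hcoe_alg, hζLcoe]
    rfl
  have hconj : (starRingEnd ℂ) ζ = ζ⁻¹ := by
    have hnorm : ‖ζ‖ = 1 := Complex.norm_eq_one_of_pow_eq_one hζ.pow_eq_one hNpos.ne'
    exact (Complex.inv_eq_conj hnorm).symm
  have hy'c : (y' : ℂ) = ∑ k : Fin d, (x' k : ℂ) * (ζ⁻¹) ^ (k : ℕ) := by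
    rw [hy', hy, map_sum]
    refine Finset.sum_congr rfl fun k _ => ?_
    rw [map_mul, map_pow, hconj, hx']
  have hy'L : y' = ∑ k : Fin d, algebraMap (ℚ⟮ζ ^ d⟯) (ℚ⟮ζ⟯) (x' k) * (ζL⁻¹) ^ (k : ℕ) := by
    apply Subtype.coe_injective
    push_cast [hy'c, hcoe_alg, hζLcoe]
    rfl
  -- embeddings
  have hgen : ∀ σ : ℚ⟮ζ⟯ →ₐ[ℚ⟮ζ ^ d⟯] ℂ, ∃ i : Fin d, σ ζL = ω ^ (i : ℕ) * ζ := by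
    intro σ
    have hc : ζL ^ d = algebraMap (ℚ⟮ζ ^ d⟯) (ℚ⟮ζ⟯) (AdjoinSimple.gen ℚ (ζ ^ d)) := by
      apply Subtype.coe_injective
      push_cast [hcoe_alg]
      rfl
    have h1 : σ ζL ^ d = ζ ^ d := by
      rw [← map_pow, hc, AlgHom.commutes, hcoe_algC]
      rfl
    have h2 : (σ ζL * ζ⁻¹) ^ d = 1 := by
      rw [mul_pow, h1, inv_pow, mul_inv_cancel₀ (pow_ne_zero _ hζne)]
    haveI : NeZero d := ⟨hdpos.ne'⟩
    obtain ⟨i, hi, hpow⟩ := hω.eq_pow_of_pow_eq_one h2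
    refine ⟨⟨i, hi⟩, ?_⟩
    rw [Fin.val_mk, hpow, inv_mul_cancel_right₀ hζne]
  choose G hG using hgen
  have hGinj : Function.Injective G := by
    intro σ τ h
    have hst : σ ζL = τ ζL := by rw [hG σ, hG τ, h]
    have h2 : (σ.restrictScalars ℚ) = (τ.restrictScalars ℚ) := by
      apply (adjoin.powerBasis hζint).algHom_ext
      rw [adjoin.powerBasis_gen]
      exact hst
    ext z
    exact DFunLike.congr_fun h2 z
  have hGbij : Function.Bijective G := by
    refine (Fintype.bijective_iff_injective_and_card G).mpr ⟨hGinj, ?_⟩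
    rw [AlgHom.card, hrankKL, Fintype.card_fin]
  -- the trace over K
  have hT : Algebra.trace (ℚ⟮ζ ^ d⟯) (ℚ⟮ζ⟯) (y * y')
      = (d : ℚ⟮ζ ^ d⟯) * ∑ k : Fin d, x k * x' k := by
    apply (algebraMap (ℚ⟮ζ ^ d⟯) ℂ).injective
    rw [trace_eq_sum_embeddings (E := ℂ)]
    have hσ : ∀ σ : ℚ⟮ζ⟯ →ₐ[ℚ⟮ζ ^ d⟯] ℂ, σ (y * y') =
        (∑ k : Fin d, (x k : ℂ) * (ω ^ ((G σ : Fin d) : ℕ) * ζ) ^ (k : ℕ)) *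
        (∑ l : Fin d, (x' l : ℂ) * ((ω ^ ((G σ : Fin d) : ℕ) * ζ)⁻¹) ^ (l : ℕ)) := by
      intro σ
      rw [map_mul, hyL, hy'L, map_sum, map_sum]
      congr 1
      · refine Finset.sum_congr rfl fun k _ => ?_
        rw [map_mul, map_pow, AlgHom.commutes, hcoe_algC, hG σ]
      · refine Finset.sum_congr rfl fun l _ => ?_
        rw [map_mul, map_pow, AlgHom.commutes, hcoe_algC, map_inv₀, hG σ]
    rw [Fintype.sum_bijective G hGbij _
      (fun i : Fin d => (∑ k : Fin d, (x k : ℂ) * (ω ^ (i : ℕ) * ζ) ^ (k : ℕ)) *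
        (∑ l : Fin d, (x' l : ℂ) * ((ω ^ (i : ℕ) * ζ)⁻¹) ^ (l : ℕ))) hσ]
    -- now compute the sum over i
    have key : ∀ k l : Fin d,
        (∑ i : Fin d, (ω ^ (k : ℕ) / ω ^ (l : ℕ)) ^ (i : ℕ)) = if k = l then (d : ℂ) else 0 := by
      intro k l
      by_cases hkl : k = l
      · subst hkl
        simp [div_self (pow_ne_zero (k : ℕ) hωne)]
      · have hμ1 : ω ^ (k : ℕ) / ω ^ (l : ℕ) ≠ 1 := by
          intro h
          rw [div_eq_one_iff_eq (pow_ne_zero _ hωne)] at h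
          exact hkl (Fin.ext (hω.pow_inj k.isLt l.isLt h))
        have hμd : (ω ^ (k : ℕ) / ω ^ (l : ℕ)) ^ d = 1 := by
          rw [div_pow, ← pow_mul, ← pow_mul, mul_comm (k : ℕ) d, mul_comm (l : ℕ) d,
            pow_mul, pow_mul, hω.pow_eq_one, one_pow, one_pow, div_one]
        rw [if_neg hkl, Fin.sum_univ_eq_sum_range (fun i => (ω ^ (k : ℕ) / ω ^ (l : ℕ)) ^ i) d,
          geom_sum_eq hμ1, hμd, sub_self, zero_div]
    have expand : ∀ i : Fin d,
        (∑ k : Fin d, (x k : ℂ) * (ω ^ (i : ℕ) * ζ) ^ (k : ℕ)) *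
          (∑ l : Fin d, (x' l : ℂ) * ((ω ^ (i : ℕ) * ζ)⁻¹) ^ (l : ℕ))
        = ∑ k : Fin d, ∑ l : Fin d,
            ((x k : ℂ) * (x' l : ℂ) * (ζ ^ (k : ℕ) / ζ ^ (l : ℕ)))
              * (ω ^ (k : ℕ) / ω ^ (l : ℕ)) ^ (i : ℕ) := by
      intro i
      rw [Finset.sum_mul_sum]
      refine Finset.sum_congr rfl fun k _ => Finset.sum_congr rfl fun l _ => ?_
      field_simp
      have hζl : ζ ^ (l : ℕ) * ζ⁻¹ ^ (l : ℕ) = 1 := by rw [← mul_pow, mul_inv_cancel₀ hζne, one_pow]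
      linear_combination ((x k : ℂ) * ω ^ ((i : ℕ) * (k : ℕ)) * ζ ^ (k : ℕ) * (x' l : ℂ) * ω⁻¹ ^ ((i : ℕ) * (l : ℕ))) * hζl
    calc (∑ σi : Fin d, (∑ k : Fin d, (x k : ℂ) * (ω ^ (σi : ℕ) * ζ) ^ (k : ℕ)) *
          (∑ l : Fin d, (x' l : ℂ) * ((ω ^ (σi : ℕ) * ζ)⁻¹) ^ (l : ℕ)))
        = ∑ k : Fin d, ∑ l : Fin d,
            ((x k : ℂ) * (x' l : ℂ) * (ζ ^ (k : ℕ) / ζ ^ (l : ℕ)))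
              * ∑ i : Fin d, (ω ^ (k : ℕ) / ω ^ (l : ℕ)) ^ (i : ℕ) := by
          simp_rw [expand]
          rw [Finset.sum_comm]
          refine Finset.sum_congr rfl fun k _ => ?_
          rw [Finset.sum_comm]
          refine Finset.sum_congr rfl fun l _ => ?_
          rw [Finset.mul_sum]
      _ = ∑ k : Fin d, (x k : ℂ) * (x' k : ℂ) * (d : ℂ) := by
          simp_rw [key, mul_ite, mul_zero]
          refine Finset.sum_congr rfl fun k _ => ?_
          simp [Finset.sum_ite_eq', div_self (pow_ne_zero (k : ℕ) hζne)]
      _ = algebraMap (ℚ⟮ζ ^ d⟯) ℂ ((d : ℚ⟮ζ ^ d⟯) * ∑ k : Fin d, x k * x' k) := by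
          rw [map_mul, map_natCast, map_sum, Finset.mul_sum]
          refine Finset.sum_congr rfl fun k _ => ?_
          rw [hcoe_algC]
          push_cast
          ring
  -- put it together
  have tower := Algebra.trace_trace (R := ℚ) (S := ℚ⟮ζ ^ d⟯) (T := ℚ⟮ζ⟯) (y * y')
  rw [← tower, hT]
  have hsmul : ((d : ℚ⟮ζ ^ d⟯) * ∑ k : Fin d, x k * x' k)
      = ((d : ℚ) • (∑ k : Fin d, x k * x' k)) := by
    rw [Algebra.smul_def]
    norm_num
  rw [hsmul, map_smul, map_sum, smul_eq_mul]

/-- For N = s·2^{n+1} (s ≥ 3 odd), 0 ≤ r ≤ n, L = ℚ(ζ_N), K = ℚ(ζ_N^{2^{n−r}}) and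
x_k ∈ K, the element x = ∑_k x_k ζ_N^k satisfies
Tr_{L/ℚ}(x·conj(x)) = 2^{n−r} · ∑_k Tr_{K/ℚ}(x_k·conj(x_k)). -/
theorem stmt11 (s n r : ℕ) (hs3 : 3 ≤ s) (hsodd : Odd s) (hr : r ≤ n)
    (N : ℕ) (hN : N = s * 2 ^ (n + 1))
    (ζ : ℂ) (hζ : IsPrimitiveRoot ζ N)
    (L : IntermediateField ℚ ℂ) (hL : L = ℚ⟮ζ⟯)
    (K : IntermediateField ℚ ℂ) (hK : K = ℚ⟮ζ ^ (2 ^ (n - r))⟯)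
    (x : Fin (2 ^ (n - r)) → K)
    (y : L) (hy : (y : ℂ) = ∑ k : Fin (2 ^ (n - r)), (x k : ℂ) * ζ ^ (k : ℕ))
    (y' : L) (hy' : (y' : ℂ) = (starRingEnd ℂ) (y : ℂ))
    (x' : Fin (2 ^ (n - r)) → K)
    (hx' : ∀ k, (x' k : ℂ) = (starRingEnd ℂ) (x k : ℂ)) :
    Algebra.trace ℚ L (y * y')
      = (2 ^ (n - r) : ℚ) * ∑ k : Fin (2 ^ (n - r)), Algebra.trace ℚ K (x k * x' k) := by
  subst hL hK
  have hs0 : 0 < s := by omega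
  have hcop : ∀ m : ℕ, Nat.Coprime s (2 ^ m) := by
    intro m
    refine Nat.Coprime.pow_right _ ?_
    have h2 : ¬ (2 ∣ s) := by
      have := Nat.odd_iff.mp hsodd; omega
    exact Nat.coprime_comm.mp ((Nat.prime_two.coprime_iff_not_dvd).mpr h2)
  have hNdM : N = 2 ^ (n - r) * (s * 2 ^ (r + 1)) := by
    have h1 : n + 1 = (n - r) + (r + 1) := by omega
    rw [hN, h1, pow_add]; ring
  have htotN : N.totient = s.totient * 2 ^ n := by
    rw [hN, Nat.totient_mul (hcop _), Nat.totient_prime_pow Nat.prime_two (Nat.succ_pos n)]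
    simp
  have htotM : (s * 2 ^ (r + 1)).totient = s.totient * 2 ^ r := by
    rw [Nat.totient_mul (hcop _), Nat.totient_prime_pow Nat.prime_two (Nat.succ_pos r)]
    simp
  have htot : N.totient = 2 ^ (n - r) * (s * 2 ^ (r + 1)).totient := by
    have hpow : (2 : ℕ) ^ n = 2 ^ (n - r) * 2 ^ r := by
      rw [← pow_add]; congr 1; omega
    rw [htotN, htotM, hpow]; ring
  have := stmt11_aux N (2 ^ (n - r)) (s * 2 ^ (r + 1))
    (Nat.pow_pos (by norm_num)) (by positivity) hNdM htot ζ hζ x y hy y' hy' x' hx'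
  rw [this]
  congr 1
  push_cast
  ring
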